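/- For every fixed r > 0, the function μ ↦ S_μ(r) is completely monotonic on (0,∞), i.e., for all m ∈ ℕ and μ > 0, (−1)^m ∂^m/∂μ^m S_μ(r) ≥ 0. -/

import Mathlib

open Real

noncomputable def mathieuS (μ r : ℝ) : ℝ :=
  ∑' n : ℕ, (2 * ((n : ℝ) + 1)) / ((((n : ℝ) + 1) ^ 2 + r ^ 2) ^ (μ + 1))

noncomputable def zetaR (s : ℝ) : ℝ := ∑' n : ℕ, ((n : ℝ) + 1) ^ (-s)

namespace MathieuAux

variable (r : ℝ)

noncomputable def a (n : ℕ) : ℝ := ((n : ℝ) + 1) ^ 2 + r ^ 2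

noncomputable def G (m : ℕ) (t : ℝ) : ℝ :=
  ∑' n : ℕ, (2 * ((n : ℝ) + 1)) * (-Real.log (a r n)) ^ m * (a r n) ^ (-(t + 1))

variable {r}

lemma one_lt_a (hr : 0 < r) (n : ℕ) : 1 < a r n := by
  have h2 : (0:ℝ) < r ^ 2 := pow_pos hr 2
  have h0 : (0:ℝ) ≤ (n : ℝ) := Nat.cast_nonneg n
  unfold a; nlinarith

lemma a_pos (hr : 0 < r) (n : ℕ) : 0 < a r n := lt_trans one_pos (one_lt_a hr n)

lemma log_a_pos (hr : 0 < r) (n : ℕ) : 0 < Real.log (a r n) :=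
  Real.log_pos (one_lt_a hr n)

lemma sq_le_a (n : ℕ) : ((n : ℝ) + 1) ^ 2 ≤ a r n := by
  unfold a; nlinarith [sq_nonneg r]

/-- Key summability estimate. -/
lemma summable_bound (hr : 0 < r) (k : ℕ) {ε : ℝ} (hε : 0 < ε) :
    Summable (fun n : ℕ => (2 * ((n : ℝ) + 1)) * (Real.log (a r n)) ^ k * (a r n) ^ (-(ε + 1))) := by
  set δ : ℝ := ε / (2 * (k + 1)) with hδdef
  have hδ : 0 < δ := by positivity
  have hsum : Summable (fun n : ℕ => 2 * δ⁻¹ ^ k * ((n : ℝ) + 1) ^ (-(1 + ε))) := by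
    apply Summable.mul_left
    have h0 : Summable (fun n : ℕ => ((n : ℝ)) ^ (-(1 + ε))) := by
      rw [Real.summable_nat_rpow]
      linarith
    have := (summable_nat_add_iff 1).2 h0
    apply this.congr
    intro n
    push_cast
    ring_nf
  apply Summable.of_nonneg_of_le _ _ hsum
  · intro n
    have := a_pos hr n
    have := (log_a_pos hr n).le
    positivity
  · intro n
    have han : 0 < a r n := a_pos hr n
    have hn1 : (0:ℝ) < (n : ℝ) + 1 := by positivity
    have hn1' : (1:ℝ) ≤ (n : ℝ) + 1 := by linarith [(Nat.cast_nonneg n : (0:ℝ) ≤ (n:ℝ))]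
    have hlog : Real.log (a r n) ≤ (a r n) ^ δ / δ := Real.log_le_rpow_div han.le hδ
    have hlogk : (Real.log (a r n)) ^ k ≤ δ⁻¹ ^ k * (a r n) ^ (δ * k) := by
      calc (Real.log (a r n)) ^ k ≤ ((a r n) ^ δ / δ) ^ k :=
            pow_le_pow_left₀ (log_a_pos hr n).le hlog k
        _ = δ⁻¹ ^ k * ((a r n) ^ δ) ^ k := by
            rw [div_pow, mul_comm, div_eq_mul_inv, inv_pow]
        _ = δ⁻¹ ^ k * (a r n) ^ (δ * k) := by
            rw [← Real.rpow_natCast ((a r n) ^ δ), ← Real.rpow_mul han.le]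
    set e : ℝ := δ * k - (ε + 1) with he
    have hek : δ * (k : ℝ) ≤ ε / 2 := by
      rw [hδdef, div_mul_eq_mul_div, div_le_div_iff₀ (by positivity) (by norm_num)]
      nlinarith [hε.le, (Nat.cast_nonneg k : (0:ℝ) ≤ k)]
    have hee : e ≤ -(1 + ε / 2) := by rw [he]; linarith
    have hneg : e ≤ 0 := by linarith
    have key : (2 * ((n : ℝ) + 1)) * (Real.log (a r n)) ^ k * (a r n) ^ (-(ε + 1))
        ≤ 2 * δ⁻¹ ^ k * (((n : ℝ) + 1) * (a r n) ^ e) := by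
      have h1 : (2 * ((n : ℝ) + 1)) * (Real.log (a r n)) ^ k * (a r n) ^ (-(ε + 1))
          ≤ (2 * ((n : ℝ) + 1)) * (δ⁻¹ ^ k * (a r n) ^ (δ * k)) * (a r n) ^ (-(ε + 1)) := by
        apply mul_le_mul_of_nonneg_right _ (Real.rpow_nonneg han.le _)
        exact mul_le_mul_of_nonneg_left hlogk (by positivity)
      refine h1.trans_eq ?_
      rw [he, Real.rpow_sub han, Real.rpow_neg han.le]
      have : a r n ^ (ε + 1) ≠ 0 := (Real.rpow_pos_of_pos han _).ne'
      field_simp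
    refine key.trans ?_
    apply mul_le_mul_of_nonneg_left _ (by positivity)
    have h2 : (a r n) ^ e ≤ (((n : ℝ) + 1) ^ 2) ^ e :=
      Real.rpow_le_rpow_of_nonpos (by positivity) (sq_le_a n) hneg
    have h3 : (((n : ℝ) + 1) ^ 2) ^ e = ((n : ℝ) + 1) ^ (2 * e) := by
      rw [← Real.rpow_natCast ((n : ℝ) + 1) 2, ← Real.rpow_mul hn1.le]
      norm_num
    calc ((n : ℝ) + 1) * (a r n) ^ e ≤ ((n : ℝ) + 1) * ((n : ℝ) + 1) ^ (2 * e) := by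
          rw [← h3]; exact mul_le_mul_of_nonneg_left h2 hn1.le
      _ = ((n : ℝ) + 1) ^ (1 + 2 * e) := by
          rw [Real.rpow_add hn1, Real.rpow_one]
      _ ≤ ((n : ℝ) + 1) ^ (-(1 + ε)) :=
          Real.rpow_le_rpow_of_exponent_le hn1' (by linarith)

lemma summable_G (hr : 0 < r) (m : ℕ) {t : ℝ} (ht : 0 < t) :
    Summable (fun n : ℕ => (2 * ((n : ℝ) + 1)) * (-Real.log (a r n)) ^ m * (a r n) ^ (-(t + 1))) := by
  apply Summable.of_norm
  apply (summable_bound hr m ht).congr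
  intro n
  have := a_pos hr n
  have hl := (log_a_pos hr n).le
  rw [norm_mul, norm_mul, Real.norm_eq_abs, Real.norm_eq_abs, Real.norm_eq_abs,
    abs_pow, abs_neg, abs_of_nonneg hl, abs_of_nonneg (by positivity),
    abs_of_nonneg (Real.rpow_nonneg this.le _)]

lemma hasDerivAt_G (hr : 0 < r) (m : ℕ) {t : ℝ} (ht : 0 < t) :
    HasDerivAt (G r m) (G r (m + 1) t) t := by
  have hhalf : 0 < t / 2 := by linarith
  have H := hasDerivAt_tsum_of_isPreconnected
    (F := ℝ) (𝕜 := ℝ) (g := fun (n : ℕ) (z : ℝ) => (2 * ((n : ℝ) + 1)) * (-Real.log (a r n)) ^ m * (a r n) ^ (-(z + 1)))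
    (g' := fun (n : ℕ) (y : ℝ) => (2 * ((n : ℝ) + 1)) * (-Real.log (a r n)) ^ (m + 1) * (a r n) ^ (-(y + 1)))
    (t := Set.Ioi (t / 2)) (y₀ := t) (y := t)
    (summable_bound hr (m + 1) hhalf) isOpen_Ioi isPreconnected_Ioi
    ?_ ?_ (Set.mem_Ioi.2 (by linarith : t / 2 < t)) (summable_G hr m ht)
    (Set.mem_Ioi.2 (by linarith : t / 2 < t))
  · exact H
  · intro n y _
    have han : 0 < a r n := a_pos hr n
    have h1 : HasDerivAt (fun z : ℝ => -(z + 1)) (-1) y := by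
      exact ((hasDerivAt_id y).add_const 1).neg
    have h2 : HasDerivAt (fun w : ℝ => (a r n) ^ w) ((a r n) ^ (-(y + 1)) * Real.log (a r n))
        (-(y + 1)) := (Real.hasStrictDerivAt_const_rpow han (-(y + 1))).hasDerivAt
    have h3 := h2.comp y h1
    have h4 := h3.const_mul ((2 * ((n : ℝ) + 1)) * (-Real.log (a r n)) ^ m)
    convert h4 using 1
    · rfl
    · rfl
    ring
  · intro n y hy
    have han : 0 < a r n := a_pos hr n
    have hl := (log_a_pos hr n).le
    rw [Real.norm_eq_abs, abs_mul, abs_mul, abs_pow, abs_neg, abs_of_nonneg hl,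
      abs_of_nonneg (by positivity : (0:ℝ) ≤ 2 * ((n : ℝ) + 1)),
      abs_of_nonneg (Real.rpow_nonneg han.le _)]
    have : (a r n) ^ (-(y + 1)) ≤ (a r n) ^ (-(t / 2 + 1)) :=
      Real.rpow_le_rpow_of_exponent_le (one_lt_a hr n).le (by
        have : t / 2 < y := hy
        linarith)
    have hnn : (0:ℝ) ≤ 2 * ((n : ℝ) + 1) * Real.log (a r n) ^ (m + 1) := by positivity
    calc 2 * ((n : ℝ) + 1) * Real.log (a r n) ^ (m + 1) * (a r n) ^ (-(y + 1))
        ≤ 2 * ((n : ℝ) + 1) * Real.log (a r n) ^ (m + 1) * (a r n) ^ (-(t / 2 + 1)) :=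
          mul_le_mul_of_nonneg_left this hnn
      _ = _ := rfl

lemma mathieuS_eq_G (t : ℝ) : mathieuS t r = G r 0 t := by
  unfold mathieuS G a
  apply tsum_congr
  intro n
  rw [pow_zero, mul_one, Real.rpow_neg (by positivity), div_eq_mul_inv]

lemma iteratedDeriv_eq_G (hr : 0 < r) (m : ℕ) :
    ∀ μ : ℝ, 0 < μ → iteratedDeriv m (fun t => mathieuS t r) μ = G r m μ := by
  induction m with
  | zero => intro μ _; simp [iteratedDeriv_zero, mathieuS_eq_G]
  | succ m ih =>
    intro μ hμ
    rw [iteratedDeriv_succ]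
    have hev : (iteratedDeriv m (fun t => mathieuS t r)) =ᶠ[nhds μ] G r m := by
      filter_upwards [isOpen_Ioi.mem_nhds (Set.mem_Ioi.2 hμ)] with x hx
      exact ih x hx
    rw [hev.deriv_eq]
    exact (hasDerivAt_G hr m hμ).deriv

end MathieuAux

theorem stmt1 (r : ℝ) (hr : 0 < r) (m : ℕ) (μ : ℝ) (hμ : 0 < μ) :
    (-1 : ℝ) ^ m * iteratedDeriv m (fun t => mathieuS t r) μ ≥ 0 := by
  rw [MathieuAux.iteratedDeriv_eq_G hr m μ hμ]
  unfold MathieuAux.G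
  rw [← tsum_mul_left]
  apply tsum_nonneg
  intro n
  have han := MathieuAux.a_pos hr n
  have hl := (MathieuAux.log_a_pos hr n).le
  have hsign : ((-1 : ℝ)) ^ m * (-Real.log (MathieuAux.a r n)) ^ m
      = (Real.log (MathieuAux.a r n)) ^ m := by
    rw [← mul_pow]; norm_num
  have : (-1 : ℝ) ^ m * (2 * ((n : ℝ) + 1) * (-Real.log (MathieuAux.a r n)) ^ m *
      MathieuAux.a r n ^ (-(μ + 1)))
      = 2 * ((n : ℝ) + 1) * (Real.log (MathieuAux.a r n)) ^ m *
        MathieuAux.a r n ^ (-(μ + 1)) := by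
    rw [← hsign]; ring
  rw [this]
  positivity
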